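/- Let Δⁿ ⊂ ℂⁿ be the unit polydisk (unit ball for the sup-norm ‖z‖ = max_j |z_j|). For ξ ∈ ∂Δⁿ, define ch(ξ) = {η ∈ ∂Δⁿ : [ξ,η] ⊆ ∂Δⁿ}. Then ch(ξ) = ⋃_{j : |ξ_j| = 1} {η ∈ ∂Δⁿ : η_j = ξ_j}. -/

import Mathlib

set_option maxHeartbeats 1000000


/-- In the unit polydisk `Δⁿ = {z ∈ ℂⁿ : max_j |z_j| < 1}`, for every boundary
point `ξ`, one has `ch(ξ) = ⋃_{j : |ξ_j|=1} {η ∈ ∂Δⁿ : η_j = ξ_j}`. -/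
theorem polydisk_ch_eq {n : ℕ} (hn : 0 < n) {ξ : Fin n → ℂ}
    (hξ : ξ ∈ frontier {z : Fin n → ℂ | ‖z‖ < 1}) :
    {η ∈ frontier {z : Fin n → ℂ | ‖z‖ < 1} |
        segment ℝ ξ η ⊆ frontier {z : Fin n → ℂ | ‖z‖ < 1}} =
      ⋃ j ∈ {j : Fin n | ‖ξ j‖ = 1},
        {η ∈ frontier {z : Fin n → ℂ | ‖z‖ < 1} | η j = ξ j} := by
  have hfr : frontier {z : Fin n → ℂ | ‖z‖ < 1} = {z : Fin n → ℂ | ‖z‖ = 1} := by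
    have hball : {z : Fin n → ℂ | ‖z‖ < 1} = Metric.ball 0 1 := by
      ext z; simp [Metric.mem_ball, dist_zero_right]
    rw [hball, frontier_ball 0 one_ne_zero]
    ext z; simp [Metric.mem_sphere, dist_zero_right]
  rw [hfr] at hξ ⊢
  have hξn : ‖ξ‖ = 1 := hξ
  ext η
  simp only [Set.mem_setOf_eq, Set.mem_iUnion, exists_prop]
  constructor
  · rintro ⟨hη, hseg⟩
    have hmid : ((1:ℝ)/2) • ξ + ((1:ℝ)/2) • η ∈ segment ℝ ξ η :=
      ⟨1/2, 1/2, by norm_num, by norm_num, by norm_num⟩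
    have h2 : ‖ξ + η‖ = 2 := by
      have h := hseg hmid
      have h' : ‖((1:ℝ)/2) • (ξ + η)‖ = 1 := by rw [smul_add]; exact h
      rw [norm_smul] at h'
      simp only [norm_div, norm_one, Real.norm_ofNat] at h'
      nlinarith [h']
    obtain ⟨j, hj⟩ : ∃ j, ¬ ‖(ξ + η) j‖ < 2 := by
      by_contra hc
      push_neg at hc
      have := (pi_norm_lt_iff (by norm_num : (0:ℝ) < 2) (x := ξ + η)).2 hc
      linarith
    push_neg at hj
    have hξj : ‖ξ j‖ ≤ 1 := hξn ▸ norm_le_pi_norm ξ j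
    have hηj : ‖η j‖ ≤ 1 := hη ▸ norm_le_pi_norm η j
    have hadd : ‖ξ j + η j‖ ≤ ‖ξ j‖ + ‖η j‖ := norm_add_le _ _
    have hj' : ‖ξ j + η j‖ = 2 := by
      simp only [Pi.add_apply] at hj
      linarith
    have hξ1 : ‖ξ j‖ = 1 := by linarith
    have hη1 : ‖η j‖ = 1 := by linarith
    have heq : η j = ξ j := by
      have a1 : (ξ j).re ^ 2 + (ξ j).im ^ 2 = 1 := by
        have := Complex.sq_norm (ξ j)
        rw [Complex.normSq_apply] at this
        nlinarith
      have a2 : (η j).re ^ 2 + (η j).im ^ 2 = 1 := by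
        have := Complex.sq_norm (η j)
        rw [Complex.normSq_apply] at this
        nlinarith
      have a3 : ((ξ j).re + (η j).re) ^ 2 + ((ξ j).im + (η j).im) ^ 2 = 4 := by
        have := Complex.sq_norm (ξ j + η j)
        rw [Complex.normSq_apply] at this
        simp only [Complex.add_re, Complex.add_im] at this
        nlinarith
      have key : ((ξ j).re - (η j).re) ^ 2 + ((ξ j).im - (η j).im) ^ 2 = 0 := by
        nlinarith [a1, a2, a3]
      have k1 : ((ξ j).re - (η j).re) ^ 2 = 0 := by
        linarith [key, sq_nonneg ((ξ j).re - (η j).re), sq_nonneg ((ξ j).im - (η j).im)]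
      have k2 : ((ξ j).im - (η j).im) ^ 2 = 0 := by
        linarith [key, sq_nonneg ((ξ j).re - (η j).re), sq_nonneg ((ξ j).im - (η j).im)]
      have hre : (η j).re = (ξ j).re := by
        have := pow_eq_zero_iff (n := 2) (by norm_num) |>.1 k1
        linarith [sub_eq_zero.1 this]
      have him : (η j).im = (ξ j).im := by
        have := pow_eq_zero_iff (n := 2) (by norm_num) |>.1 k2
        linarith [sub_eq_zero.1 this]
      exact Complex.ext hre him
    exact ⟨j, hξ1, hη, heq⟩
  · rintro ⟨j, hj1, hη, hje⟩
    refine ⟨hη, ?_⟩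
    rintro z ⟨a, b, ha, hb, hab, rfl⟩
    have hle : ‖a • ξ + b • η‖ ≤ 1 := by
      calc ‖a • ξ + b • η‖ ≤ ‖a • ξ‖ + ‖b • η‖ := norm_add_le _ _
        _ = a * 1 + b * 1 := by
            rw [norm_smul, norm_smul, hξn, hη, Real.norm_of_nonneg ha,
              Real.norm_of_nonneg hb]
        _ = 1 := by linarith
    have hcoord : (a • ξ + b • η) j = ξ j := by
      simp only [Pi.add_apply, Pi.smul_apply, hje]
      rw [← add_smul, hab, one_smul]
    have hge : 1 ≤ ‖a • ξ + b • η‖ := by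
      have hn1 : ‖(a • ξ + b • η) j‖ = 1 := by
        rw [hcoord, hj1]
      calc (1:ℝ) = ‖(a • ξ + b • η) j‖ := hn1.symm
        _ ≤ ‖a • ξ + b • η‖ := norm_le_pi_norm _ j
    exact le_antisymm hle hge
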